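/- Fix X ∈ ℝ^{n×d}, vectors Y, μ ∈ ℝ^n, and set ε := Y − μ. Let A : ℝ → ℝ be convex, ℓ(θ) := (1/n)(−YᵀXθ + Σ_i A((Xθ)_i)), Risk(θ) := (1/n)(−μᵀXθ + Σ_i A((Xθ)_i)), and assume ℓ is L-smooth with respect to ‖·‖₁ on the probability simplex Δ_d. Let (θ_t) be exponentiated gradient descent iterates for ℓ, initialized at θ_0 ∈ int(Δ_d) with constant step size η ∈ (0, 1/L], and set λ_T := 1/(ηT). Then for every integer T ≥ 1 and every θ ∈ Δ_d with D_KL(θ, θ_0) < ∞: Risk(θ_T) − Risk(θ) ≤ (1/(2λ_T))‖Xᵀε/n‖_∞² + λ_T D_KL(θ, θ_0). -/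

import Mathlib

open Finset

/-- The GLM objective `(1/n) (−Yᵀ(Xθ) + Σ_i A((Xθ)_i))`. -/
noncomputable def glmObj {n d : ℕ} (X : Matrix (Fin n) (Fin d) ℝ) (Y : Fin n → ℝ)
    (A : ℝ → ℝ) (θ : Fin d → ℝ) : ℝ :=
  (1 / (n : ℝ)) * (-(∑ i, Y i * X.mulVec θ i) + ∑ i, A (X.mulVec θ i))

/-- The probability simplex `Δ_d = {a : a_i ≥ 0, Σ a_i = 1}`. -/
def probSimplex (d : ℕ) : Set (Fin d → ℝ) :=
  {a | (∀ i, 0 ≤ a i) ∧ ∑ i, a i = 1}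

/-- Kullback–Leibler divergence `Σ_i a_i log(a_i / b_i)` (with `0 · log 0 = 0`). -/
noncomputable def klDiv' {d : ℕ} (a b : Fin d → ℝ) : ℝ :=
  ∑ i, a i * Real.log (a i / b i)

/-- The gradient of `g : ℝ^d → ℝ` in coordinates, `(∇g(x))_j = (Dg(x))(e_j)`. -/
noncomputable def piGrad {d : ℕ} (g : (Fin d → ℝ) → ℝ) (x : Fin d → ℝ) : Fin d → ℝ :=
  fun j => fderiv ℝ g x (Pi.single j 1)

lemma aux_pinsker_core {t : ℝ} (ht : 0 < t) :
    3*(t-1)^2/(2*(t+2)) ≤ t * Real.log t - t + 1 := by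
  set g : ℝ → ℝ := fun s => s * Real.log s - s + 1 - 3*(s-1)^2/(2*(s+2)) with hg
  set g' : ℝ → ℝ := fun s => Real.log s - 3*(s-1)*(s+5)/(2*(s+2)^2) with hg'
  have hderiv : ∀ s ∈ Set.Ioi (0:ℝ), HasDerivAt g (g' s) s := by
    intro s hs
    have hs0 : (0:ℝ) < s := hs
    have hs2 : s + 2 ≠ 0 := by positivity
    have h1 : HasDerivAt (fun x : ℝ => x * Real.log x) (Real.log s + 1) s :=
      Real.hasDerivAt_mul_log hs0.ne'
    have h2 : HasDerivAt (fun x : ℝ => 3*(x-1)^2) (3*(2*(s-1))) s := by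
      have : HasDerivAt (fun x : ℝ => (x-1)^2) (2*(s-1)) s := by
        simpa using (((hasDerivAt_id s).sub_const 1).fun_pow 2)
      simpa [mul_comm, mul_assoc] using this.const_mul 3
    have h3 : HasDerivAt (fun x : ℝ => 2*(x+2)) 2 s := by
      simpa using ((hasDerivAt_id s).add_const 2).const_mul 2
    have h4 : HasDerivAt (fun x : ℝ => 3*(x-1)^2/(2*(x+2)))
        ((3*(2*(s-1))*(2*(s+2)) - 3*(s-1)^2*2)/(2*(s+2))^2) s := h2.div h3 (by positivity)
    have h5 : HasDerivAt g (Real.log s + 1 - 1 -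
        ((3*(2*(s-1))*(2*(s+2)) - 3*(s-1)^2*2)/(2*(s+2))^2)) s :=
      ((h1.sub (hasDerivAt_id s)).add_const 1).sub h4
    convert h5 using 1
    rw [hg']
    field_simp
    ring
  have hderiv' : ∀ s ∈ Set.Ioi (0:ℝ), HasDerivAt g' (1/s - 27/(s+2)^3) s := by
    intro s hs
    have hs0 : (0:ℝ) < s := hs
    have hs2 : s + 2 ≠ 0 := by positivity
    have h1 : HasDerivAt Real.log (1/s) s := by
      simpa [one_div] using Real.hasDerivAt_log hs0.ne'
    have h2 : HasDerivAt (fun x : ℝ => 3*(x-1)*(x+5)) (3*(s-1) + 3*(s+5)) s := by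
      have ha : HasDerivAt (fun x : ℝ => 3*(x-1)) 3 s := by
        simpa using ((hasDerivAt_id s).sub_const 1).const_mul 3
      have := ha.fun_mul ((hasDerivAt_id s).add_const 5)
      simpa [mul_comm, mul_assoc, mul_add, add_comm] using this
    have h3 : HasDerivAt (fun x : ℝ => 2*(x+2)^2) (2*(2*(s+2))) s := by
      have : HasDerivAt (fun x : ℝ => (x+2)^2) (2*(s+2)) s := by
        simpa using (((hasDerivAt_id s).add_const 2).fun_pow 2)
      simpa [mul_comm, mul_assoc] using this.const_mul 2
    have h4 : HasDerivAt (fun x : ℝ => 3*(x-1)*(x+5)/(2*(x+2)^2))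
        (((3*(s-1) + 3*(s+5))*(2*(s+2)^2) - 3*(s-1)*(s+5)*(2*(2*(s+2))))/(2*(s+2)^2)^2) s :=
      h2.div h3 (by positivity)
    have h5 := h1.fun_sub h4
    refine h5.congr_deriv ?_
    field_simp
    ring
  have hconv : ConvexOn ℝ (Set.Ioi (0:ℝ)) g := by
    apply convexOn_of_hasDerivWithinAt2_nonneg (convex_Ioi 0) (f' := g') (f'' := fun s => 1/s - 27/(s+2)^3)
    · intro s hs
      exact ((hderiv s hs).continuousAt).continuousWithinAt
    · intro s hs
      rw [interior_Ioi] at hs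
      exact (hderiv s hs).hasDerivWithinAt
    · intro s hs
      rw [interior_Ioi] at hs
      exact (hderiv' s hs).hasDerivWithinAt
    · intro s hs
      rw [interior_Ioi] at hs
      have hs0 : (0:ℝ) < s := hs
      rw [sub_nonneg, div_le_div_iff₀ (by positivity) (by positivity)]
      nlinarith [sq_nonneg (s-1), hs0.le, sq_nonneg s]
  have hg1 : g 1 = 0 := by norm_num [hg]
  have hg'1 : g' 1 = 0 := by norm_num [hg']
  have key : 0 ≤ g t := by
    rcases lt_trichotomy t 1 with h | h | h
    · have hs := hconv.slope_le_of_hasDerivAt (Set.mem_Ioi.2 ht) (Set.mem_Ioi.2 one_pos) h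
        (hderiv 1 (Set.mem_Ioi.2 one_pos))
      rw [hg'1, slope_def_field] at hs
      have h1t : 0 < 1 - t := by linarith
      rw [div_nonpos_iff] at hs
      rcases hs with ⟨h1, h2⟩ | ⟨h1, h2⟩
      · linarith
      · rw [hg1] at h1; linarith
    · simp [h, hg1]
    · have hs := hconv.le_slope_of_hasDerivAt (Set.mem_Ioi.2 one_pos) (Set.mem_Ioi.2 ht) h
        (hderiv 1 (Set.mem_Ioi.2 one_pos))
      rw [hg'1, slope_def_field, hg1, sub_zero] at hs
      have h1t : 0 < t - 1 := by linarith
      rw [div_nonneg_iff] at hs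
      rcases hs with ⟨h1, h2⟩ | ⟨h1, h2⟩
      · linarith
      · linarith
  simp only [hg] at key
  linarith

lemma aux_pinsker_pt {p q : ℝ} (hp : 0 ≤ p) (hq : 0 < q) :
    3*(p-q)^2/(2*(p+2*q)) ≤ p * Real.log (p/q) - p + q := by
  rcases eq_or_lt_of_le hp with h0 | hp0
  · rw [← h0]
    norm_num
    rw [div_le_iff₀ (by positivity)]
    nlinarith
  · have ht := aux_pinsker_core (t := p/q) (by positivity)
    have hq' : q ≠ 0 := hq.ne'
    have h1 : q * (3*(p/q-1)^2/(2*(p/q+2))) = 3*(p-q)^2/(2*(p+2*q)) := by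
      rw [eq_div_iff (by positivity)]
      field_simp
    have h2 : q * (p/q * Real.log (p/q) - p/q + 1) = p * Real.log (p/q) - p + q := by
      field_simp
    nlinarith [mul_le_mul_of_nonneg_left ht hq.le]

lemma aux_pinsker {d : ℕ} (a b : Fin d → ℝ) (ha0 : ∀ i, 0 ≤ a i) (ha1 : ∑ i, a i = 1)
    (hb0 : ∀ i, 0 < b i) (hb1 : ∑ i, b i = 1) :
    (∑ i, |a i - b i|)^2 ≤ 2 * klDiv' a b := by
  have hpos : ∀ i ∈ Finset.univ (α := Fin d), (0:ℝ) < a i + 2 * b i := by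
    intro i _; have := ha0 i; have := hb0 i; linarith
  have hsed := Finset.sq_sum_div_le_sum_sq_div Finset.univ (fun i => |a i - b i|) hpos
  have hsum3 : ∑ i, (a i + 2 * b i) = 3 := by
    rw [Finset.sum_add_distrib, ha1, ← Finset.mul_sum, hb1]; norm_num
  rw [hsum3] at hsed
  have hterm : ∑ i, |a i - b i| ^ 2 / (a i + 2 * b i) ≤
      ∑ i, (2/3) * (a i * Real.log (a i / b i) - a i + b i) := by
    apply Finset.sum_le_sum
    intro i _
    have h := aux_pinsker_pt (ha0 i) (hb0 i)
    rw [sq_abs]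
    have hne : a i + 2 * b i ≠ 0 := (hpos i (Finset.mem_univ i)).ne'
    have heq : (a i - b i)^2/(a i + 2*b i) = (2/3)*(3*(a i - b i)^2/(2*(a i + 2*b i))) := by
      field_simp
    rw [heq]
    linarith
  have hx : ∑ i, (2/3 : ℝ) * (a i * Real.log (a i / b i) - a i + b i)
      = (2/3) * klDiv' a b := by
    rw [← Finset.mul_sum]
    congr 1
    rw [klDiv']
    rw [Finset.sum_add_distrib, Finset.sum_sub_distrib, ha1, hb1]
    ring
  rw [hx] at hterm
  have := hsed.trans hterm
  nlinarith [sq_nonneg (∑ i, |a i - b i|)]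

lemma aux_kl_nonneg {d : ℕ} (a b : Fin d → ℝ) (ha0 : ∀ i, 0 ≤ a i) (ha1 : ∑ i, a i = 1)
    (hb0 : ∀ i, 0 < b i) (hb1 : ∑ i, b i = 1) : 0 ≤ klDiv' a b := by
  nlinarith [aux_pinsker a b ha0 ha1 hb0 hb1, sq_nonneg (∑ i, |a i - b i|)]

lemma clm_repr {d : ℕ} (φ : (Fin d → ℝ) →L[ℝ] ℝ) (h : Fin d → ℝ) :
    φ h = ∑ j, h j * φ (Pi.single j 1) := by
  have : h = ∑ j, h j • (Pi.single j 1 : Fin d → ℝ) := by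
    funext i
    simp [Pi.single_apply, Finset.sum_apply]
  conv_lhs => rw [this]
  rw [map_sum]
  simp [smul_eq_mul]

lemma glm_convex {n d : ℕ} (X : Matrix (Fin n) (Fin d) ℝ) (Y : Fin n → ℝ)
    (A : ℝ → ℝ) (hA : ConvexOn ℝ Set.univ A) :
    ConvexOn ℝ Set.univ (glmObj X Y A) := by
  have hlin : ∀ (i : Fin n) (θ₁ θ₂ : Fin d → ℝ) (a b : ℝ),
      X.mulVec (a • θ₁ + b • θ₂) i = a * X.mulVec θ₁ i + b * X.mulVec θ₂ i := by
    intro i θ₁ θ₂ a b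
    simp [Matrix.mulVec_add, Matrix.mulVec_smul]
  constructor
  · exact convex_univ
  · intro θ₁ _ θ₂ _ a b ha hb hab
    have hn0 : (0:ℝ) ≤ 1 / (n:ℝ) := by positivity
    simp only [glmObj, smul_eq_mul]
    have hlinsum : -(∑ i, Y i * X.mulVec (a • θ₁ + b • θ₂) i)
        = a * (-(∑ i, Y i * X.mulVec θ₁ i)) + b * (-(∑ i, Y i * X.mulVec θ₂ i)) := by
      have hx : ∑ i, Y i * (a * X.mulVec θ₁ i + b * X.mulVec θ₂ i)
          = a * (∑ i, Y i * X.mulVec θ₁ i) + b * (∑ i, Y i * X.mulVec θ₂ i) := by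
        rw [Finset.mul_sum, Finset.mul_sum, ← Finset.sum_add_distrib]
        exact Finset.sum_congr rfl fun i _ => by ring
      simp only [hlin, hx]
      ring
    have hAsum : ∑ i, A (X.mulVec (a • θ₁ + b • θ₂) i)
        ≤ a * (∑ i, A (X.mulVec θ₁ i)) + b * (∑ i, A (X.mulVec θ₂ i)) := by
      rw [Finset.mul_sum, Finset.mul_sum, ← Finset.sum_add_distrib]
      apply Finset.sum_le_sum
      intro i _
      rw [hlin]
      exact hA.2 (Set.mem_univ _) (Set.mem_univ _) ha hb hab
    calc 1 / (n:ℝ) * (-(∑ i, Y i * X.mulVec (a • θ₁ + b • θ₂) i)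
            + ∑ i, A (X.mulVec (a • θ₁ + b • θ₂) i))
        ≤ 1 / (n:ℝ) * ((a * (-(∑ i, Y i * X.mulVec θ₁ i)) + b * (-(∑ i, Y i * X.mulVec θ₂ i)))
            + (a * (∑ i, A (X.mulVec θ₁ i)) + b * (∑ i, A (X.mulVec θ₂ i)))) := by
          apply mul_le_mul_of_nonneg_left _ hn0
          rw [hlinsum]
          linarith
      _ = a * (1 / (n:ℝ) * (-(∑ i, Y i * X.mulVec θ₁ i) + ∑ i, A (X.mulVec θ₁ i)))
            + b * (1 / (n:ℝ) * (-(∑ i, Y i * X.mulVec θ₂ i) + ∑ i, A (X.mulVec θ₂ i))) := by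
          ring

/-- first-order convexity inequality -/

lemma convex_grad_ineq {d : ℕ} {f : (Fin d → ℝ) → ℝ} (hconv : ConvexOn ℝ Set.univ f)
    {x : Fin d → ℝ} (hd : DifferentiableAt ℝ f x) (y : Fin d → ℝ) :
    f x + ∑ j, (y j - x j) * piGrad f x j ≤ f y := by
  by_cases hxy : x = y
  · simp [hxy]
  have hgrad : ∑ j, (y j - x j) * piGrad f x j = fderiv ℝ f x (y - x) := by
    rw [clm_repr (fderiv ℝ f x) (y - x)]
    simp [piGrad]
  rw [hgrad]
  -- restrict to the line
  set c : ℝ → (Fin d → ℝ) := fun t => x + t • (y - x) with hc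
  have hφconv : ConvexOn ℝ Set.univ (f ∘ c) := by
    have : c = fun t : ℝ => t • (y - x) + x := by funext t; rw [hc]; abel
    rw [this]
    exact hconv.comp_affineMap ((LinearMap.toSpanSingleton ℝ _ (y - x)).toAffineMap +
      AffineMap.const ℝ ℝ x) |>.subset (Set.subset_univ _) convex_univ
  have hcd : HasDerivAt c (y - x) 0 := by
    have h1 : HasDerivAt (fun t : ℝ => t • (y - x)) ((1:ℝ) • (y - x)) 0 :=
      (hasDerivAt_id 0).smul_const (y - x)
    have := h1.const_add x
    show HasDerivAt (fun t : ℝ => x + t • (y - x)) (y - x) 0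
    simpa using this
  have hc0' : c 0 = x := by simp [hc]
  have hfd : HasFDerivAt f (fderiv ℝ f x) (c 0) := by rw [hc0']; exact hd.hasFDerivAt
  have hφd : HasDerivAt (f ∘ c) (fderiv ℝ f x (y - x)) 0 := hfd.comp_hasDerivAt 0 hcd
  have hs := hφconv.le_slope_of_hasDerivAt (Set.mem_univ 0) (Set.mem_univ 1) one_pos hφd
  rw [slope_def_field] at hs
  have hc0 : (f ∘ c) 0 = f x := by simp [hc]
  have hc1 : (f ∘ c) 1 = f y := by simp [hc]
  rw [hc0, hc1, show (1:ℝ) - 0 = 1 by norm_num, div_one] at hs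
  linarith

lemma descent_lemma {d : ℕ} {f : (Fin d → ℝ) → ℝ} {L : ℝ}
    (hdiff : ∀ θ ∈ probSimplex d, DifferentiableAt ℝ f θ)
    (hsmooth : ∀ x ∈ probSimplex d, ∀ y ∈ probSimplex d, ∀ j,
      |piGrad f x j - piGrad f y j| ≤ L * ∑ i, |x i - y i|)
    {x y : Fin d → ℝ} (hx : x ∈ probSimplex d) (hy : y ∈ probSimplex d) :
    f y ≤ f x + (∑ j, (y j - x j) * piGrad f x j) + L/2 * (∑ j, |y j - x j|)^2 := by
  set c : ℝ → (Fin d → ℝ) := fun t => x + t • (y - x) with hc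
  have hmem : ∀ t ∈ Set.Icc (0:ℝ) 1, c t ∈ probSimplex d := by
    intro t ht
    obtain ⟨hx0, hx1⟩ := hx
    obtain ⟨hy0, hy1⟩ := hy
    constructor
    · intro i
      have : c t i = (1 - t) * x i + t * y i := by
        simp [hc, Pi.add_apply, Pi.smul_apply, Pi.sub_apply, smul_eq_mul]; ring
      rw [this]
      have := hx0 i; have := hy0 i
      nlinarith [ht.1, ht.2]
    · have : ∀ i, c t i = x i + t * (y i - x i) := by
        intro i; simp [hc, Pi.add_apply, Pi.smul_apply, Pi.sub_apply, smul_eq_mul]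
      simp only [this]
      rw [Finset.sum_add_distrib, hx1, ← Finset.mul_sum, Finset.sum_sub_distrib, hy1, hx1]
      ring
  have hcd : ∀ t : ℝ, HasDerivAt c (y - x) t := by
    intro t
    have h1 : HasDerivAt (fun s : ℝ => s • (y - x)) ((1:ℝ) • (y - x)) t :=
      (hasDerivAt_id t).smul_const (y - x)
    show HasDerivAt (fun s : ℝ => x + s • (y - x)) (y - x) t
    simpa using h1.const_add x
  have hφd : ∀ t ∈ Set.Icc (0:ℝ) 1, HasDerivAt (f ∘ c) (fderiv ℝ f (c t) (y - x)) t := by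
    intro t ht
    exact ((hdiff (c t) (hmem t ht)).hasFDerivAt).comp_hasDerivAt t (hcd t)
  set B : ℝ := L * (∑ j, |y j - x j|)^2 with hB
  set D0 : ℝ := ∑ j, (y j - x j) * piGrad f x j with hD0
  have hD0' : fderiv ℝ f x (y - x) = D0 := by
    rw [clm_repr (fderiv ℝ f x) (y - x), hD0]
    simp [piGrad]
  set ψ : ℝ → ℝ := fun t => f (c t) - t * D0 - B/2 * t^2 with hψ
  have hψd : ∀ t ∈ Set.Icc (0:ℝ) 1,
      HasDerivAt ψ (fderiv ℝ f (c t) (y - x) - D0 - B * t) t := by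
    intro t ht
    have h1 := hφd t ht
    have h2 : HasDerivAt (fun s : ℝ => s * D0) D0 t := by
      simpa using (hasDerivAt_id t).mul_const D0
    have h3 : HasDerivAt (fun s : ℝ => B/2 * s^2) (B/2 * (2*t)) t := by
      simpa using ((hasDerivAt_pow 2 t)).const_mul (B/2)
    have := (h1.fun_sub h2).fun_sub h3
    refine this.congr_deriv ?_
    ring
  have hψ'le : ∀ t ∈ Set.Ioo (0:ℝ) 1, fderiv ℝ f (c t) (y - x) - D0 - B * t ≤ 0 := by
    intro t ht
    have htm : t ∈ Set.Icc (0:ℝ) 1 := ⟨ht.1.le, ht.2.le⟩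
    have hct : c t ∈ probSimplex d := hmem t htm
    have hrep : fderiv ℝ f (c t) (y - x) = ∑ j, (y j - x j) * piGrad f (c t) j := by
      rw [clm_repr (fderiv ℝ f (c t)) (y - x)]
      simp [piGrad]
    rw [hrep, hD0]
    have hdiffsum : ∑ j, (y j - x j) * piGrad f (c t) j - ∑ j, (y j - x j) * piGrad f x j
        = ∑ j, (y j - x j) * (piGrad f (c t) j - piGrad f x j) := by
      rw [← Finset.sum_sub_distrib]
      exact Finset.sum_congr rfl fun j _ => by ring
    have hctx : ∑ i, |c t i - x i| = t * ∑ j, |y j - x j| := by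
      rw [Finset.mul_sum]
      apply Finset.sum_congr rfl
      intro i _
      have : c t i - x i = t * (y i - x i) := by
        simp [hc, Pi.add_apply, Pi.smul_apply, Pi.sub_apply, smul_eq_mul]
      rw [this, abs_mul, abs_of_pos ht.1]
    have hbound : ∑ j, (y j - x j) * (piGrad f (c t) j - piGrad f x j) ≤ B * t := by
      calc ∑ j, (y j - x j) * (piGrad f (c t) j - piGrad f x j)
          ≤ ∑ j, |y j - x j| * (L * ∑ i, |c t i - x i|) := by
            apply Finset.sum_le_sum
            intro j _
            calc (y j - x j) * (piGrad f (c t) j - piGrad f x j)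
                ≤ |(y j - x j) * (piGrad f (c t) j - piGrad f x j)| := le_abs_self _
              _ = |y j - x j| * |piGrad f (c t) j - piGrad f x j| := abs_mul _ _
              _ ≤ |y j - x j| * (L * ∑ i, |c t i - x i|) := by
                  apply mul_le_mul_of_nonneg_left (hsmooth (c t) hct x hx j) (abs_nonneg _)
        _ = B * t := by
            rw [← Finset.sum_mul, hctx, hB]
            ring
    linarith [hbound, hdiffsum]
  have hanti : AntitoneOn ψ (Set.Icc (0:ℝ) 1) := by
    apply antitoneOn_of_deriv_nonpos (convex_Icc 0 1)
    · intro t ht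
      exact ((hψd t ht).continuousAt).continuousWithinAt
    · intro t ht
      rw [interior_Icc] at ht
      exact ((hψd t ⟨ht.1.le, ht.2.le⟩).differentiableAt).differentiableWithinAt
    · intro t ht
      rw [interior_Icc] at ht
      rw [(hψd t ⟨ht.1.le, ht.2.le⟩).deriv]
      exact hψ'le t ht
  have h10 := hanti (Set.mem_Icc.2 ⟨le_refl 0, zero_le_one⟩)
    (Set.mem_Icc.2 ⟨zero_le_one, le_refl 1⟩) zero_le_one
  have hc0 : c 0 = x := by simp [hc]
  have hc1 : c 1 = y := by funext i; simp [hc]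
  simp only [hψ, hc0, hc1] at h10
  norm_num at h10
  nlinarith [h10]

lemma kl_identity {d : ℕ} (p g u q : Fin d → ℝ) (η Z : ℝ)
    (hZdef : Z = ∑ j, p j * Real.exp (-η * g j))
    (hq : ∀ i, q i = p i * Real.exp (-η * g i) / Z)
    (hp : ∀ i, 0 < p i) (hZ : 0 < Z)
    (hu0 : ∀ i, 0 ≤ u i) (hu1 : ∑ i, u i = 1) :
    klDiv' u p - klDiv' u q - klDiv' q p = η * (∑ j, (q j - u j) * g j) := by
  have hqpos : ∀ i, 0 < q i := by
    intro i; rw [hq i]; exact div_pos (mul_pos (hp i) (Real.exp_pos _)) hZ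
  have hq1 : ∑ i, q i = 1 := by
    simp only [hq]
    rw [← Finset.sum_div, ← hZdef, div_self hZ.ne']
  have hlogq : ∀ i, Real.log (q i) = Real.log (p i) + (-η * g i) - Real.log Z := by
    intro i
    rw [hq i, Real.log_div (mul_pos (hp i) (Real.exp_pos _)).ne' hZ.ne', Real.log_mul (hp i).ne' (Real.exp_pos _).ne',
      Real.log_exp]
  have part1 : klDiv' u p - klDiv' u q = ∑ i, u i * (-η * g i - Real.log Z) := by
    rw [klDiv', klDiv', ← Finset.sum_sub_distrib]
    apply Finset.sum_congr rfl
    intro i _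
    rcases eq_or_lt_of_le (hu0 i) with h0 | hpos
    · rw [← h0]; ring
    · rw [Real.log_div hpos.ne' (hp i).ne', Real.log_div hpos.ne' (hqpos i).ne', hlogq i]
      ring
  have part2 : klDiv' q p = ∑ i, q i * (-η * g i - Real.log Z) := by
    rw [klDiv']
    apply Finset.sum_congr rfl
    intro i _
    rw [Real.log_div (hqpos i).ne' (hp i).ne', hlogq i]
    ring
  rw [part1, part2]
  have e1 : ∑ i, u i * (-η * g i - Real.log Z)
      = -η * (∑ i, u i * g i) - Real.log Z := by
    have : ∀ i, u i * (-η * g i - Real.log Z) = -η * (u i * g i) - Real.log Z * u i :=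
      fun i => by ring
    simp only [this]
    rw [Finset.sum_sub_distrib, ← Finset.mul_sum, ← Finset.mul_sum, hu1]
    ring
  have e2 : ∑ i, q i * (-η * g i - Real.log Z)
      = -η * (∑ i, q i * g i) - Real.log Z := by
    have : ∀ i, q i * (-η * g i - Real.log Z) = -η * (q i * g i) - Real.log Z * q i :=
      fun i => by ring
    simp only [this]
    rw [Finset.sum_sub_distrib, ← Finset.mul_sum, ← Finset.mul_sum, hq1]
    ring
  rw [e1, e2]
  have e3 : ∑ j, (q j - u j) * g j = ∑ j, q j * g j - ∑ j, u j * g j := by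
    rw [← Finset.sum_sub_distrib]
    exact Finset.sum_congr rfl fun j _ => by ring
  rw [e3]
  ring

/-- **Risk bound for exponentiated gradient descent on a GLM.**
Fix `X`, `Y`, `μ` and a convex cumulant `A`, and assume the GLM loss `ℓ` is `L`-smooth with
respect to `‖·‖₁` on the probability simplex (`‖∇ℓ(x) − ∇ℓ(y)‖_∞ ≤ L ‖x − y‖₁`). Let
`θseq` be exponentiated gradient descent iterates for `ℓ`, initialized at
`θseq 0 ∈ int Δ_d` with constant step size `η ∈ (0, 1/L]`, and set `λ_T := 1/(ηT)`. Then
for every `T ≥ 1` and every `θ ∈ Δ_d` with `D_KL(θ, θseq 0) < ∞` (automatic here since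
`θseq 0` has positive coordinates):
`Risk(θseq T) − Risk(θ) ≤ (1/(2λ_T)) ‖Xᵀε/n‖_∞² + λ_T · D_KL(θ, θseq 0)`. -/
theorem egd_glm_risk_bound {n d : ℕ} (hn : 0 < n)
    (X : Matrix (Fin n) (Fin d) ℝ) (Y μ : Fin n → ℝ)
    (A : ℝ → ℝ) (hA : ConvexOn ℝ Set.univ A)
    (hdiff : ∀ θ ∈ probSimplex d, DifferentiableAt ℝ (glmObj X Y A) θ)
    (L : ℝ) (hL : 0 < L)
    (hsmooth : ∀ x ∈ probSimplex d, ∀ y ∈ probSimplex d, ∀ j,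
      |piGrad (glmObj X Y A) x j - piGrad (glmObj X Y A) y j| ≤ L * ∑ i, |x i - y i|)
    (η : ℝ) (hη : 0 < η ∧ η ≤ 1 / L)
    (θseq : ℕ → Fin d → ℝ)
    (hθ0_mem : θseq 0 ∈ probSimplex d) (hθ0_pos : ∀ i, 0 < θseq 0 i)
    (hupd : ∀ t i, θseq (t + 1) i =
      θseq t i * Real.exp (-η * piGrad (glmObj X Y A) (θseq t) i) /
        ∑ j, θseq t j * Real.exp (-η * piGrad (glmObj X Y A) (θseq t) j))
    (T : ℕ) (hT : 1 ≤ T)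
    (θ : Fin d → ℝ) (hθ : θ ∈ probSimplex d) :
    glmObj X μ A (θseq T) - glmObj X μ A θ ≤
      η * T / 2 * (⨆ j, |X.transpose.mulVec (fun i => Y i - μ i) j / n|) ^ 2
        + (1 / (η * T)) * klDiv' θ (θseq 0) := by
  have hdne : Nonempty (Fin d) := by
    by_contra h
    rw [not_nonempty_iff] at h
    have h2 := hθ.2
    rw [Finset.univ_eq_empty, Finset.sum_empty] at h2
    norm_num at h2
  haveI := hdne
  set f := glmObj X Y A with hf
  -- iterates stay in the simplex with positive coordinates
  have key : ∀ t, (∀ i, 0 < θseq t i) ∧ θseq t ∈ probSimplex d := by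
    intro t
    induction t with
    | zero => exact ⟨hθ0_pos, hθ0_mem⟩
    | succ t ih =>
      obtain ⟨hp, hm⟩ := ih
      have hZ : 0 < ∑ j, θseq t j * Real.exp (-η * piGrad f (θseq t) j) :=
        Finset.sum_pos (fun j _ => mul_pos (hp j) (Real.exp_pos _)) Finset.univ_nonempty
      have hposd : ∀ i, 0 < θseq (t+1) i := by
        intro i; rw [hupd t i]
        exact div_pos (mul_pos (hp i) (Real.exp_pos _)) hZ
      refine ⟨hposd, fun i => (hposd i).le, ?_⟩
      have : ∀ i, θseq (t+1) i = θseq t i * Real.exp (-η * piGrad f (θseq t) i) /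
          ∑ j, θseq t j * Real.exp (-η * piGrad f (θseq t) j) := hupd t
      simp only [this]
      rw [← Finset.sum_div, div_self hZ.ne']
  -- per-step mirror descent inequality
  have step : ∀ t, ∀ u, u ∈ probSimplex d →
      η * (f (θseq (t+1)) - f u) ≤ klDiv' u (θseq t) - klDiv' u (θseq (t+1)) := by
    intro t u hu
    have hppos : ∀ i, 0 < θseq t i := (key t).1
    have hpmem := (key t).2
    have hp'pos : ∀ i, 0 < θseq (t+1) i := (key (t+1)).1
    have hp'mem := (key (t+1)).2
    have hZ : 0 < ∑ j, θseq t j * Real.exp (-η * piGrad f (θseq t) j) :=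
      Finset.sum_pos (fun j _ => mul_pos (hppos j) (Real.exp_pos _)) Finset.univ_nonempty
    have hdesc := descent_lemma hdiff hsmooth hpmem hp'mem
    have hconv := convex_grad_ineq (glm_convex X Y A hA) (hdiff (θseq t) hpmem) u
    have hkl := kl_identity (θseq t) (piGrad f (θseq t)) u (θseq (t+1)) η _
      rfl (hupd t) hppos hZ hu.1 hu.2
    have hpin := aux_pinsker (θseq (t+1)) (θseq t) (fun i => (hp'pos i).le) hp'mem.2
      hppos hpmem.2
    have hklnn := aux_kl_nonneg (θseq (t+1)) (θseq t) (fun i => (hp'pos i).le) hp'mem.2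
      hppos hpmem.2
    have hsum : ∑ j, (θseq (t+1) j - θseq t j) * piGrad f (θseq t) j
        = ∑ j, (θseq (t+1) j - u j) * piGrad f (θseq t) j
          + ∑ j, (u j - θseq t j) * piGrad f (θseq t) j := by
      rw [← Finset.sum_add_distrib]
      exact Finset.sum_congr rfl fun j _ => by ring
    have hηL : η * L ≤ 1 := by
      rw [← le_div_iff₀ hL]; exact hη.2
    have hcomb : f (θseq (t+1)) - f u ≤ ∑ j, (θseq (t+1) j - u j) * piGrad f (θseq t) j
        + L/2 * (∑ j, |θseq (t+1) j - θseq t j|)^2 := by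
      linarith [hdesc, hconv, hsum]
    have h6 := mul_le_mul_of_nonneg_left hcomb hη.1.le
    have h4 : η * (L/2 * (∑ j, |θseq (t+1) j - θseq t j|)^2)
        ≤ η * L * klDiv' (θseq (t+1)) (θseq t) := by
      nlinarith [mul_nonneg (mul_nonneg hη.1.le hL.le) (sub_nonneg.2 hpin)]
    have h5 : η * L * klDiv' (θseq (t+1)) (θseq t) ≤ klDiv' (θseq (t+1)) (θseq t) := by
      nlinarith [mul_nonneg (sub_nonneg.2 hηL) hklnn]
    have h7 : η * (∑ j, (θseq (t+1) j - u j) * piGrad f (θseq t) j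
          + L/2 * (∑ j, |θseq (t+1) j - θseq t j|)^2)
        = η * (∑ j, (θseq (t+1) j - u j) * piGrad f (θseq t) j)
          + η * (L/2 * (∑ j, |θseq (t+1) j - θseq t j|)^2) := by ring
    rw [h7] at h6
    linarith [hkl, h4, h5, h6]
  -- monotone decrease of the loss
  have hdec : ∀ t, f (θseq (t+1)) ≤ f (θseq t) := by
    intro t
    have h1 := step t (θseq t) (key t).2
    have hklself : klDiv' (θseq t) (θseq t) = 0 := by
      rw [klDiv']
      exact Finset.sum_eq_zero fun i _ => by
        rw [div_self ((key t).1 i).ne', Real.log_one, mul_zero]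
    have hklnn := aux_kl_nonneg (θseq t) (θseq (t+1)) (fun i => ((key t).1 i).le)
      (key t).2.2 (key (t+1)).1 (key (t+1)).2.2
    rw [hklself] at h1
    have h2 : η * (f (θseq (t+1)) - f (θseq t)) ≤ η * 0 := by linarith
    have := le_of_mul_le_mul_left h2 hη.1
    linarith
  have hmono : ∀ s t : ℕ, s ≤ t → f (θseq t) ≤ f (θseq s) := by
    intro s t hst
    induction t, hst using Nat.le_induction with
    | base => exact le_refl _
    | succ t hst ih => exact (hdec t).trans ih
  -- telescoping
  have hT0 : (0:ℝ) < (T:ℝ) := by exact_mod_cast Nat.lt_of_lt_of_le Nat.zero_lt_one hT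
  have tele : (T:ℝ) * (η * (f (θseq T) - f θ)) ≤ klDiv' θ (θseq 0) - klDiv' θ (θseq T) := by
    have each : ∀ t ∈ Finset.range T, η * (f (θseq T) - f θ)
        ≤ klDiv' θ (θseq t) - klDiv' θ (θseq (t+1)) := by
      intro t ht
      have h1 := step t θ hθ
      have h2 : f (θseq T) ≤ f (θseq (t+1)) :=
        hmono (t+1) T (Nat.succ_le_of_lt (Finset.mem_range.1 ht))
      have h3 := mul_le_mul_of_nonneg_left (sub_le_sub_right h2 (f θ)) hη.1.le
      linarith
    have hsumle := Finset.sum_le_sum each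
    rw [Finset.sum_range_sub' (fun k => klDiv' θ (θseq k))] at hsumle
    rw [Finset.sum_const, Finset.card_range, nsmul_eq_mul] at hsumle
    exact hsumle
  -- risk decomposition
  have hrisk : ∀ w : Fin d → ℝ, glmObj X μ A w
      = f w + ∑ j, w j * (X.transpose.mulVec (fun i => Y i - μ i) j / n) := by
    intro w
    have hswap : ∑ j, w j * (X.transpose.mulVec (fun i => Y i - μ i) j / n)
        = (1/(n:ℝ)) * ∑ i, (Y i - μ i) * X.mulVec w i := by
      calc ∑ j, w j * (X.transpose.mulVec (fun i => Y i - μ i) j / n)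
          = ∑ j, ∑ i, w j * (X i j * (Y i - μ i)) / n := by
            apply Finset.sum_congr rfl; intro j _
            simp only [Matrix.mulVec, Matrix.transpose_apply, dotProduct]
            rw [Finset.sum_div, Finset.mul_sum]
            apply Finset.sum_congr rfl; intro i _; ring
        _ = ∑ i, ∑ j, w j * (X i j * (Y i - μ i)) / n := Finset.sum_comm
        _ = (1/(n:ℝ)) * ∑ i, (Y i - μ i) * X.mulVec w i := by
            rw [Finset.mul_sum]
            apply Finset.sum_congr rfl; intro i _
            simp only [Matrix.mulVec, dotProduct]
            rw [Finset.mul_sum, Finset.mul_sum]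
            apply Finset.sum_congr rfl; intro j _; ring
    rw [hswap, hf, glmObj, glmObj]
    have hexp : ∑ i, (Y i - μ i) * X.mulVec w i
        = ∑ i, Y i * X.mulVec w i - ∑ i, μ i * X.mulVec w i := by
      rw [← Finset.sum_sub_distrib]
      exact Finset.sum_congr rfl fun i _ => by ring
    rw [hexp]
    ring
  -- the noise term
  set s := ⨆ j, |X.transpose.mulVec (fun i => Y i - μ i) j / (n:ℝ)| with hs
  have hbdd : BddAbove (Set.range fun j => |X.transpose.mulVec (fun i => Y i - μ i) j / (n:ℝ)|) :=
    Set.Finite.bddAbove (Set.finite_range _)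
  have hvj : ∀ j, |X.transpose.mulVec (fun i => Y i - μ i) j / (n:ℝ)| ≤ s := by
    intro j; rw [hs]; exact le_ciSup hbdd j
  have hs0 : 0 ≤ s := le_trans (abs_nonneg _) (hvj (Classical.arbitrary _))
  set W := ∑ j, |θseq T j - θ j| with hW
  have hW0 : 0 ≤ W := Finset.sum_nonneg fun j _ => abs_nonneg _
  have hnoise : ∑ j, (θseq T j - θ j) * (X.transpose.mulVec (fun i => Y i - μ i) j / n)
      ≤ s * W := by
    calc ∑ j, (θseq T j - θ j) * (X.transpose.mulVec (fun i => Y i - μ i) j / n)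
        ≤ ∑ j, |θseq T j - θ j| * s := by
          apply Finset.sum_le_sum
          intro j _
          calc (θseq T j - θ j) * (X.transpose.mulVec (fun i => Y i - μ i) j / n)
              ≤ |(θseq T j - θ j) * (X.transpose.mulVec (fun i => Y i - μ i) j / n)| :=
                le_abs_self _
            _ = |θseq T j - θ j| * |X.transpose.mulVec (fun i => Y i - μ i) j / n| :=
                abs_mul _ _
            _ ≤ |θseq T j - θ j| * s :=
                mul_le_mul_of_nonneg_left (hvj j) (abs_nonneg _)
      _ = s * W := by rw [hW, ← Finset.sum_mul]; ring
  have hpinT : W^2 ≤ 2 * klDiv' θ (θseq T) := by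
    have h := aux_pinsker θ (θseq T) hθ.1 hθ.2 (key T).1 (key T).2.2
    have heq : W = ∑ j, |θ j - θseq T j| := by
      rw [hW]; exact Finset.sum_congr rfl fun j _ => abs_sub_comm _ _
    rw [heq]; exact h
  have hDTnn : 0 ≤ klDiv' θ (θseq T) :=
    aux_kl_nonneg θ (θseq T) hθ.1 hθ.2 (key T).1 (key T).2.2
  set a : ℝ := η * (T:ℝ) with ha
  have haT : 0 < a := mul_pos hη.1 hT0
  have hyoung : s * W ≤ a/2 * s^2 + (1/a) * klDiv' θ (θseq T) := by
    rw [← mul_le_mul_iff_right₀ haT]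
    calc a * (s * W) ≤ a^2 * s^2/2 + W^2/2 := by nlinarith [sq_nonneg (a*s - W)]
      _ ≤ a^2 * s^2/2 + klDiv' θ (θseq T) := by linarith
      _ = a * (a/2 * s^2 + (1/a) * klDiv' θ (θseq T)) := by field_simp
  have hstep1 : f (θseq T) - f θ ≤ (1/a) * (klDiv' θ (θseq 0) - klDiv' θ (θseq T)) := by
    rw [← mul_le_mul_iff_right₀ haT]
    have h1 : a * ((1/a) * (klDiv' θ (θseq 0) - klDiv' θ (θseq T)))
        = klDiv' θ (θseq 0) - klDiv' θ (θseq T) := by field_simp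
    rw [h1]
    calc a * (f (θseq T) - f θ) = (T:ℝ) * (η * (f (θseq T) - f θ)) := by rw [ha]; ring
      _ ≤ klDiv' θ (θseq 0) - klDiv' θ (θseq T) := tele
  have goalform : glmObj X μ A (θseq T) - glmObj X μ A θ
      = (f (θseq T) - f θ)
        + ∑ j, (θseq T j - θ j) * (X.transpose.mulVec (fun i => Y i - μ i) j / n) := by
    rw [hrisk (θseq T), hrisk θ]
    have : ∑ j, (θseq T j - θ j) * (X.transpose.mulVec (fun i => Y i - μ i) j / n)
        = ∑ j, θseq T j * (X.transpose.mulVec (fun i => Y i - μ i) j / n)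
          - ∑ j, θ j * (X.transpose.mulVec (fun i => Y i - μ i) j / n) := by
      rw [← Finset.sum_sub_distrib]
      exact Finset.sum_congr rfl fun j _ => by ring
    rw [this]; ring
  have hsplit : (1/a) * (klDiv' θ (θseq 0) - klDiv' θ (θseq T))
      + (1/a) * klDiv' θ (θseq T) = (1/a) * klDiv' θ (θseq 0) := by ring
  rw [goalform]
  calc (f (θseq T) - f θ)
        + ∑ j, (θseq T j - θ j) * (X.transpose.mulVec (fun i => Y i - μ i) j / n)
      ≤ (1/a) * (klDiv' θ (θseq 0) - klDiv' θ (θseq T)) + (a/2 * s^2 + (1/a) * klDiv' θ (θseq T)) := by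
        linarith [hstep1, hnoise, hyoung]
    _ = a/2 * s^2 + (1/a) * klDiv' θ (θseq 0) := by linarith [hsplit]
    _ = η * (T:ℝ) / 2 * s^2 + (1/(η * (T:ℝ))) * klDiv' θ (θseq 0) := by rw [ha]
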